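/- Let n ≥ 5, 2 ≤ m ≤ n−2 with m/n ≠ 1/2, θ₀ = 2mπ/n, l₀ > 0, κ l₀ = 2 tan(θ₀/2). For ψ_k = A cos(2πk/n) + B sin(2πk/n) with (A,B) ≠ (0,0), the quadratic form Q(ψ) = ∑_{k=0}^{n-1} (1/l₀)[(ψ_{k+1} − ψ_k)² − 4 ψ_k ψ_{k+1} tan²(mπ/n)] satisfies Q(ψ) = (4/l₀)[sin²(π/n) − cos(2π/n) tan²(mπ/n)] ∑_k ψ_k², and Q(ψ) < 0. -/

import Mathlib

open Real Finset
open scoped RealInnerProductSpace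

abbrev E2 := EuclideanSpace ℝ (Fin 2)

/-- Rotation by π/2 in the plane. -/
noncomputable def Rot (v : E2) : E2 :=
  (WithLp.equiv 2 (Fin 2 → ℝ)).symm ![-v 1, v 0]

/-- Rotation by angle θ in the plane. -/
noncomputable def RotBy (θ : ℝ) (v : E2) : E2 :=
  (WithLp.equiv 2 (Fin 2 → ℝ)).symm
    ![Real.cos θ * v 0 - Real.sin θ * v 1, Real.sin θ * v 0 + Real.cos θ * v 1]

lemma sum_exp_aux (n : ℕ) (hn : 5 ≤ n) :
    ∑ k ∈ Finset.range n, Complex.exp ((4 * π * k / n : ℝ) * Complex.I) = 0 := by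
  have hn0 : (n : ℝ) ≠ 0 := by positivity
  have hrw : ∀ k : ℕ, ((4 * π * k / n : ℝ) * Complex.I)
      = k * (((4 * π / n : ℝ)) * Complex.I) := by
    intro k
    push_cast
    ring
  have hx1 : Complex.exp (((4 * π / n : ℝ)) * Complex.I) ≠ 1 := by
    rw [Ne, Complex.exp_eq_one_iff]
    rintro ⟨j, hj⟩
    have him := congrArg Complex.im hj
    simp [Complex.ofReal_mul] at him
    -- him : 4 * π / n = j * (2 * π)
    have hπ := Real.pi_pos
    field_simp at him
    have h2 : (2 * π) * ((j : ℝ) * n) = (2 * π) * 2 := by linear_combination -π * him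
    have h3 : (j : ℝ) * n = 2 := mul_left_cancel₀ (by positivity) h2
    have h4 : j * (n : ℤ) = 2 := by exact_mod_cast h3
    have hn5 : (5 : ℤ) ≤ (n : ℤ) := by exact_mod_cast hn
    rcases le_or_gt j 0 with h | h
    · have : j * (n : ℤ) ≤ 0 := mul_nonpos_of_nonpos_of_nonneg h (by positivity)
      omega
    · have : (n : ℤ) ≤ j * n := le_mul_of_one_le_left (by positivity) h
      omega
  have hxn : Complex.exp (((4 * π / n : ℝ)) * Complex.I) ^ n = 1 := by
    rw [← Complex.exp_nat_mul]
    have : (n : ℂ) * (((4 * π / n : ℝ)) * Complex.I) = (2 : ℤ) * (2 * π * Complex.I) := by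
      have : (n : ℂ) ≠ 0 := by exact_mod_cast hn0
      push_cast
      field_simp
      ring
    rw [this, Complex.exp_int_mul_two_pi_mul_I]
  calc ∑ k ∈ Finset.range n, Complex.exp ((4 * π * k / n : ℝ) * Complex.I)
      = ∑ k ∈ Finset.range n, Complex.exp (((4 * π / n : ℝ)) * Complex.I) ^ k := by
        refine Finset.sum_congr rfl fun k _ => ?_
        rw [hrw k, Complex.exp_nat_mul]
    _ = 0 := by
        rw [geom_sum_eq hx1, hxn]
        simp

lemma sum_cos_aux (n : ℕ) (hn : 5 ≤ n) :
    ∑ k ∈ Finset.range n, Real.cos (4 * π * k / n) = 0 := by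
  have h := sum_exp_aux n hn
  have := congrArg Complex.re h
  rw [Complex.re_sum] at this
  simp only [Complex.zero_re] at this
  rw [← this]
  exact Finset.sum_congr rfl fun k _ => (Complex.exp_ofReal_mul_I_re _).symm

lemma sum_sin_aux (n : ℕ) (hn : 5 ≤ n) :
    ∑ k ∈ Finset.range n, Real.sin (4 * π * k / n) = 0 := by
  have h := sum_exp_aux n hn
  have := congrArg Complex.im h
  rw [Complex.im_sum] at this
  simp only [Complex.zero_im] at this
  rw [← this]
  exact Finset.sum_congr rfl fun k _ => (Complex.exp_ofReal_mul_I_im _).symm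

lemma sum_lin_aux (n : ℕ) (hn : 5 ≤ n) (p q r : ℝ) :
    ∑ k ∈ Finset.range n, (p + q * Real.cos (4*π*k/n) + r * Real.sin (4*π*k/n)) = n * p := by
  rw [Finset.sum_add_distrib, Finset.sum_add_distrib, ← Finset.mul_sum, ← Finset.mul_sum,
    sum_cos_aux n hn, sum_sin_aux n hn, Finset.sum_const, Finset.card_range, nsmul_eq_mul]
  ring

set_option maxHeartbeats 1000000 in
theorem instability_nonconvex_regular_polygons (n m : ℕ) (hn : 5 ≤ n)
    (hm1 : 2 ≤ m) (hm2 : m ≤ n - 2) (hhalf : 2 * m ≠ n)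
    (l₀ κ : ℝ) (hl : 0 < l₀)
    (hκ : κ * l₀ = 2 * Real.tan ((2 * m * π / n) / 2))
    (A B : ℝ) (hAB : (A, B) ≠ (0, 0))
    (ψ : ℕ → ℝ)
    (hψ : ∀ k : ℕ, ψ k = A * Real.cos (2 * π * k / n) + B * Real.sin (2 * π * k / n)) :
    (∑ k ∈ Finset.range n,
        (1 / l₀) * ((ψ (k + 1) - ψ k) ^ 2 - 4 * ψ k * ψ (k + 1) * Real.tan (m * π / n) ^ 2) =
      (4 / l₀) * (Real.sin (π / n) ^ 2 - Real.cos (2 * π / n) * Real.tan (m * π / n) ^ 2) *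
        ∑ k ∈ Finset.range n, (ψ k) ^ 2)
    ∧ (∑ k ∈ Finset.range n,
        (1 / l₀) * ((ψ (k + 1) - ψ k) ^ 2 - 4 * ψ k * ψ (k + 1) * Real.tan (m * π / n) ^ 2) < 0) := by
  have hπ := Real.pi_pos
  have hn0 : (0:ℝ) < n := by positivity
  have hn0' : (n:ℝ) ≠ 0 := ne_of_gt hn0
  set t := Real.tan (↑m * π / ↑n) with ht
  -- pointwise identities
  have hpt1 : ∀ k : ℕ, ψ k ^ 2 = (A^2+B^2)/2 + (A^2-B^2)/2 * Real.cos (4*π*k/n)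
      + A*B * Real.sin (4*π*k/n) := by
    intro k
    have hc : Real.cos (4*π*k/n) = Real.cos (2*π*k/n)^2 - Real.sin (2*π*k/n)^2 := by
      rw [show (4*π*(k:ℝ)/n) = 2*π*k/n + 2*π*k/n by ring, Real.cos_add]; ring
    have hs : Real.sin (4*π*k/n) = 2 * Real.sin (2*π*k/n) * Real.cos (2*π*k/n) := by
      rw [show (4*π*(k:ℝ)/n) = 2*π*k/n + 2*π*k/n by ring, Real.sin_add]; ring
    have hp := Real.sin_sq_add_cos_sq (2*π*k/n)
    rw [hψ k, hc, hs]
    linear_combination ((A^2+B^2)/2) * hp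
  have hpt2 : ∀ k : ℕ, ψ k * ψ (k+1) = (A^2+B^2)/2 * Real.cos (2*π/n)
      + ((A^2-B^2)/2 * Real.cos (2*π/n) + A*B*Real.sin (2*π/n)) * Real.cos (4*π*k/n)
      + (A*B*Real.cos (2*π/n) - (A^2-B^2)/2 * Real.sin (2*π/n)) * Real.sin (4*π*k/n) := by
    intro k
    have hc : Real.cos (4*π*k/n) = Real.cos (2*π*k/n)^2 - Real.sin (2*π*k/n)^2 := by
      rw [show (4*π*(k:ℝ)/n) = 2*π*k/n + 2*π*k/n by ring, Real.cos_add]; ring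
    have hs : Real.sin (4*π*k/n) = 2 * Real.sin (2*π*k/n) * Real.cos (2*π*k/n) := by
      rw [show (4*π*(k:ℝ)/n) = 2*π*k/n + 2*π*k/n by ring, Real.sin_add]; ring
    have hp := Real.sin_sq_add_cos_sq (2*π*k/n)
    rw [hψ k, hψ (k+1),
      show (2*π*((k+1:ℕ):ℝ)/n) = 2*π*k/n + 2*π/n by push_cast; ring,
      Real.cos_add, Real.sin_add, hc, hs]
    linear_combination (Real.cos (2*π/n) * (A^2+B^2)/2) * hp
  have hpt3 : ψ n = ψ 0 := by
    rw [hψ n, hψ 0, show (2*π*(n:ℝ)/n) = 2*π by field_simp]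
    norm_num
  set T := (n:ℝ) * ((A^2+B^2)/2) with hT
  have hS1 : ∑ k ∈ Finset.range n, ψ k ^ 2 = T := by
    rw [Finset.sum_congr rfl (fun k _ => hpt1 k), sum_lin_aux n hn, hT]
  have hC : ∑ k ∈ Finset.range n, ψ k * ψ (k+1) = Real.cos (2*π/n) * T := by
    rw [Finset.sum_congr rfl (fun k _ => hpt2 k), sum_lin_aux n hn, hT]
    ring
  have hS2 : ∑ k ∈ Finset.range n, ψ (k+1) ^ 2 = T := by
    have e1 := Finset.sum_range_succ' (fun k => ψ k ^ 2) n
    have e2 := Finset.sum_range_succ (fun k => ψ k ^ 2) n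
    rw [e2] at e1
    beta_reduce at e1
    rw [hpt3] at e1
    have : ∑ k ∈ Finset.range n, ψ (k+1) ^ 2 = ∑ k ∈ Finset.range n, ψ k ^ 2 := by
      linarith
    rw [this, hS1]
  have hsq : Real.cos (2*π/n) = 1 - 2 * Real.sin (π/n)^2 := by
    rw [show (2*π/(n:ℝ)) = 2*(π/n) by ring, Real.cos_two_mul]
    linear_combination 2 * Real.sin_sq_add_cos_sq (π/n)
  have hQ : ∑ k ∈ Finset.range n,
      (1 / l₀) * ((ψ (k + 1) - ψ k) ^ 2 - 4 * ψ k * ψ (k + 1) * t ^ 2)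
      = (1/l₀)*T - ((2+4*t^2)/l₀) * (Real.cos (2*π/n) * T) + (1/l₀)*T := by
    have hexp : ∀ k : ℕ, (1 / l₀) * ((ψ (k + 1) - ψ k) ^ 2 - 4 * ψ k * ψ (k + 1) * t ^ 2)
        = (1/l₀) * (ψ (k+1) ^ 2) - ((2+4*t^2)/l₀) * (ψ k * ψ (k+1)) + (1/l₀) * (ψ k ^ 2) := by
      intro k; field_simp; ring
    rw [Finset.sum_congr rfl (fun k _ => hexp k), Finset.sum_add_distrib,
      Finset.sum_sub_distrib, ← Finset.mul_sum, ← Finset.mul_sum, ← Finset.mul_sum,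
      hS1, hS2, hC]
  have hEq : ∑ k ∈ Finset.range n,
      (1 / l₀) * ((ψ (k + 1) - ψ k) ^ 2 - 4 * ψ k * ψ (k + 1) * t ^ 2)
      = (4 / l₀) * (Real.sin (π / n) ^ 2 - Real.cos (2 * π / n) * t ^ 2) *
        ∑ k ∈ Finset.range n, (ψ k) ^ 2 := by
    rw [hQ, hS1, hsq]
    ring
  refine ⟨hEq, ?_⟩
  rw [hEq, hS1]
  -- positivity of T
  have hAB' : A ≠ 0 ∨ B ≠ 0 := by
    by_contra h
    push_neg at h
    exact hAB (by simp [h.1, h.2])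
  have hab : 0 < A^2 + B^2 := by
    rcases hAB' with h | h
    · positivity
    · positivity
  have hT0 : 0 < T := by rw [hT]; positivity
  -- the trigonometric inequality
  set a := π / (n:ℝ) with haa
  set x := (m:ℝ) * π / (n:ℝ) with hxx
  have ha : 0 < a := by positivity
  have ha5 : a ≤ π / 5 := by
    rw [haa]
    gcongr
    exact_mod_cast hn
  have hxeq : x = (m:ℝ) * a := by rw [hxx, haa]; ring
  have hm2' : m + 2 ≤ n := by omega
  have hxlb : 2 * a ≤ x := by
    rw [hxeq]
    have : (2:ℝ) ≤ m := by exact_mod_cast hm1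
    nlinarith
  have hxub : x ≤ π - 2 * a := by
    rw [hxeq]
    have hm' : (m:ℝ) ≤ (n:ℝ) - 2 := by
      have : (m:ℝ) + 2 ≤ n := by exact_mod_cast hm2'
      linarith
    have : π = (n:ℝ) * a := by rw [haa]; field_simp
    nlinarith
  have hxne : x ≠ π / 2 := by
    intro h
    apply hhalf
    rw [hxx] at h
    have h2 : (m:ℝ) * π * 2 = n * π := by
      field_simp at h
      linear_combination π * h
    have h4 : (2 * (m:ℝ)) * π = (n:ℝ) * π := by linarith
    have h5 : (2 * (m:ℝ)) = (n:ℝ) := mul_right_cancel₀ (ne_of_gt hπ) h4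
    exact_mod_cast h5
  have h2a : 2 * a ≤ π / 2 := by linarith [ha5, hπ]
  have hxpos : 0 < x := lt_of_lt_of_le (by linarith) hxlb
  have hxpi : x < π := by linarith
  have hsinx : Real.sin (2*a) ≤ Real.sin x := by
    rcases le_or_gt x (π/2) with h | h
    · exact Real.sin_le_sin_of_le_of_le_pi_div_two (by linarith) h hxlb
    · rw [← Real.sin_pi_sub x]
      exact Real.sin_le_sin_of_le_of_le_pi_div_two (by linarith) (by linarith) (by linarith)
  have hsin2a : 0 < Real.sin (2*a) := Real.sin_pos_of_pos_of_lt_pi (by linarith) (by linarith)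
  have hsa : 0 < Real.sin a := Real.sin_pos_of_pos_of_lt_pi ha (by linarith)
  have hcos2a : 0 < Real.cos (2*a) := Real.cos_pos_of_mem_Ioo ⟨by linarith, by linarith [ha5, hπ]⟩
  have hcosx : Real.cos x ≠ 0 := by
    rw [Ne, Real.cos_eq_zero_iff]
    rintro ⟨k, hk⟩
    rw [hk] at hxpos hxpi
    have hk0 : (0:ℝ) < 2 * k + 1 := by nlinarith
    have hk1 : (2 * (k:ℝ) + 1) < 2 := by nlinarith
    have : k = 0 := by
      have h1 : (0:ℤ) < 2 * k + 1 := by exact_mod_cast hk0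
      have h2 : (2 * k + 1 : ℤ) < 2 := by exact_mod_cast hk1
      omega
    rw [this] at hk
    apply hxne
    rw [hk]; push_cast; ring
  have hcx2pos : 0 < Real.cos x ^ 2 := by
    have := pow_ne_zero 2 hcosx
    exact lt_of_le_of_ne (sq_nonneg _) (Ne.symm this)
  have hsx2 : Real.sin (2*a) ^ 2 ≤ Real.sin x ^ 2 := by nlinarith
  have hcx2 : Real.cos x ^ 2 ≤ Real.cos (2*a) ^ 2 := by
    nlinarith [Real.sin_sq_add_cos_sq x, Real.sin_sq_add_cos_sq (2*a)]
  have e1 : Real.sin a ^ 2 * Real.cos (2*a) < Real.sin (2*a) ^ 2 := by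
    rw [Real.sin_two_mul, Real.cos_two_mul]
    nlinarith [mul_pos hsa hsa, sq_nonneg (Real.sin a * Real.cos a)]
  have hkey : Real.sin a ^ 2 * Real.cos x ^ 2 < Real.cos (2*a) * Real.sin x ^ 2 := by
    calc Real.sin a ^ 2 * Real.cos x ^ 2 ≤ Real.sin a ^ 2 * Real.cos (2*a) ^ 2 := mul_le_mul_of_nonneg_left hcx2 (sq_nonneg _)
      _ = (Real.sin a ^ 2 * Real.cos (2*a)) * Real.cos (2*a) := by ring
      _ < Real.sin (2*a) ^ 2 * Real.cos (2*a) := mul_lt_mul_of_pos_right e1 hcos2a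
      _ ≤ Real.sin x ^ 2 * Real.cos (2*a) := mul_le_mul_of_nonneg_right hsx2 hcos2a.le
      _ = Real.cos (2*a) * Real.sin x ^ 2 := by ring
  have hD : Real.sin (π/n) ^ 2 - Real.cos (2*π/n) * t ^ 2 < 0 := by
    have h2an : (2*π/(n:ℝ)) = 2 * a := by rw [haa]; ring
    rw [h2an, ht, Real.tan_eq_sin_div_cos, div_pow, ← haa]
    rw [sub_neg]
    rw [mul_div_assoc']
    rw [lt_div_iff₀ hcx2pos]
    linarith [hkey]
  have h4l : 0 < 4 / l₀ := by positivity
  exact mul_neg_of_neg_of_pos (mul_neg_of_pos_of_neg h4l hD) hT0
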